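/- Consider the planar system ẋ = −xu, ẏ = −yu. The y-axis {x = 0} is invariant under any feedback, and for any locally Lipschitz feedback u : ℝ² → ℝ with u(0,5) ≠ 0, the solution starting at p = (0,5) satisfies: y(t) = 5 − 5u(p)t + O(t²) as t → 0⁺, and hence h(x(t), y(t)) = −25 u(p)² t² + O(t³) < 0 for all sufficiently small t > 0, where h(x,y) = 1 − (x+1)² − (y−5)² near p. Consequently any feedback keeping the set {h ≥ 0} forward invariant must satisfy u(0,5) = 0. -/

import Mathlib

open Filter Asymptotics Set

/-- For the planar system `ẋ = −xu, ẏ = −yu` with a locally Lipschitz feedback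
`u` such that `u(0,5) ≠ 0`: for the solution starting at `p = (0,5)`, the
`y`-axis is invariant (`x(t) ≡ 0`), `y(t) = 5 − 5u(p)t + O(t²)` as `t → 0⁺`,
`h(x(t),y(t)) = −25u(p)²t² + O(t³)` for `h(x,y) = 1 − (x+1)² − (y−5)²`, and
`h(x(t),y(t)) < 0` for all sufficiently small `t > 0`; so any feedback keeping
`{h ≥ 0}` forward invariant must satisfy `u(0,5) = 0`. -/
theorem stmt16 (u : ℝ × ℝ → ℝ) (hu : LocallyLipschitz u)
    (hup : u (0, 5) ≠ 0) (x y : ℝ → ℝ)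
    (hx0 : x 0 = 0) (hy0 : y 0 = 5)
    (hx : ∀ t, HasDerivAt x (-(x t * u (x t, y t))) t)
    (hy : ∀ t, HasDerivAt y (-(y t * u (x t, y t))) t) :
    (∀ t, 0 ≤ t → x t = 0) ∧
    (fun t => y t - (5 - 5 * u (0, 5) * t)) =O[nhdsWithin 0 (Set.Ioi 0)]
      (fun t => t^2) ∧
    (fun t => (1 - (x t + 1)^2 - (y t - 5)^2) - (-25 * u (0, 5)^2 * t^2))
      =O[nhdsWithin 0 (Set.Ioi 0)] (fun t => t^3) ∧
    ∀ᶠ t in nhdsWithin 0 (Set.Ioi 0),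
      1 - (x t + 1)^2 - (y t - 5)^2 < 0 := by
  have hxd : Differentiable ℝ x := fun t => (hx t).differentiableAt
  have hyd : Differentiable ℝ y := fun t => (hy t).differentiableAt
  have hcx : Continuous x := hxd.continuous
  have hcy : Continuous y := hyd.continuous
  set c : ℝ → ℝ := fun t => u (x t, y t) with hc_def
  have hcc : Continuous c := hu.continuous.comp (hcx.prodMk hcy)
  set C : ℝ → ℝ := fun t => ∫ s in (0:ℝ)..t, c s with hC_def
  have hC : ∀ t, HasDerivAt C (c t) t := fun t =>
    (hcc.integral_hasStrictDerivAt 0 t).hasDerivAt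
  -- Step 1 : x vanishes identically
  have hg : ∀ t, HasDerivAt (fun t => x t * Real.exp (C t)) 0 t := by
    intro t
    have h1 := (hx t).mul ((hC t).exp)
    convert h1 using 1
    case e'_9 => simp only [hc_def]; ring
    all_goals rfl
  have hxzero : ∀ t, x t = 0 := by
    intro t
    have h1 : x t * Real.exp (C t) = x 0 * Real.exp (C 0) :=
      is_const_of_deriv_eq_zero (fun s => (hg s).differentiableAt)
        (fun s => (hg s).deriv) t 0
    rw [hx0, zero_mul] at h1
    exact (mul_eq_zero.1 h1).resolve_right (Real.exp_ne_zero _)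
  have hc0 : c 0 = u (0, 5) := by rw [hc_def]; simp [hx0, hy0]
  set a : ℝ := u (0, 5) with ha_def
  -- y is C¹, hence locally Lipschitz
  have hly : LocallyLipschitz y := by
    apply ContDiff.locallyLipschitz (𝕂 := ℝ)
    rw [contDiff_one_iff_deriv]
    refine ⟨hyd, ?_⟩
    have hde : deriv y = fun t => -(y t * c t) := funext fun t => (hy t).deriv
    rw [hde]
    exact (hcy.mul hcc).neg
  obtain ⟨K₁, s₁, hs₁, hyL⟩ := hly 0
  obtain ⟨K₂, s₂, hs₂, huL⟩ := hu (0, 5)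
  have hev : ∀ᶠ s in nhds (0:ℝ), s ∈ s₁ ∧ (x s, y s) ∈ s₂ ∧ |c s - c 0| < 1 := by
    have h1 : ∀ᶠ s in nhds (0:ℝ), s ∈ s₁ := hs₁
    have h2 : ∀ᶠ s in nhds (0:ℝ), (x s, y s) ∈ s₂ := by
      have hcont : ContinuousAt (fun s => (x s, y s)) 0 := (hcx.prodMk hcy).continuousAt
      have hm : s₂ ∈ nhds (x 0, y 0) := by rw [hx0, hy0]; exact hs₂
      exact hcont.eventually_mem hm
    have h3 : ∀ᶠ s in nhds (0:ℝ), |c s - c 0| < 1 := by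
      have := (hcc.continuousAt (x := 0)).eventually_mem (Metric.ball_mem_nhds (c 0) one_pos)
      filter_upwards [this] with s hs
      simpa [Real.dist_eq] using hs
    exact h1.and (h2.and h3)
  rw [Metric.eventually_nhds_iff] at hev
  obtain ⟨δ, δpos, hδ⟩ := hev
  have h0mem : (0:ℝ) ∈ s₁ ∧ (x 0, y 0) ∈ s₂ ∧ |c 0 - c 0| < 1 := hδ (by simp [δpos])
  set K : ℝ := (K₁ : ℝ) * (|c 0| + 1) + 5 * ((K₂ : ℝ) * (K₁ : ℝ)) with hK_def
  have hK0 : 0 ≤ K := by positivity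
  -- derivative bound
  have hbound : ∀ s : ℝ, dist s 0 < δ → |(-(y s * c s) + 5 * c 0)| ≤ K * |s| := by
    intro s hs
    obtain ⟨hs1, hs2, hs3⟩ := hδ hs
    have hy5 : |y s - 5| ≤ (K₁ : ℝ) * |s| := by
      have := hyL.dist_le_mul s hs1 0 h0mem.1
      simpa [Real.dist_eq, hy0] using this
    have hcd : |c s - c 0| ≤ (K₂ : ℝ) * |y s - 5| := by
      have h02 : (x 0, y 0) ∈ s₂ := h0mem.2.1
      have := huL.dist_le_mul (x s, y s) hs2 (x 0, y 0) h02
      have hd : dist ((x s, y s)) ((x 0, y 0)) = |y s - 5| := by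
        rw [Prod.dist_eq]
        simp [Real.dist_eq, hxzero, hx0, hy0]
      rwa [hd, Real.dist_eq] at this
    have hcb : |c s| ≤ |c 0| + 1 := by
      have := abs_sub_abs_le_abs_sub (c s) (c 0)
      linarith
    have key : -(y s * c s) + 5 * c 0 = -((y s - 5) * c s) - 5 * (c s - c 0) := by ring
    rw [key]
    calc |(-((y s - 5) * c s) - 5 * (c s - c 0))|
        ≤ |(y s - 5) * c s| + |5 * (c s - c 0)| := by
          have := abs_add_le (-((y s - 5) * c s)) (-(5 * (c s - c 0)))
          simpa [sub_eq_add_neg, abs_neg] using this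
      _ = |y s - 5| * |c s| + 5 * |c s - c 0| := by
          rw [abs_mul, abs_mul]; norm_num
      _ ≤ ((K₁ : ℝ) * |s|) * (|c 0| + 1) + 5 * ((K₂ : ℝ) * ((K₁ : ℝ) * |s|)) := by
          have hh1 : |y s - 5| * |c s| ≤ ((K₁ : ℝ) * |s|) * (|c 0| + 1) :=
            mul_le_mul hy5 hcb (abs_nonneg _) (by positivity)
          have hh2 : |c s - c 0| ≤ (K₂ : ℝ) * ((K₁ : ℝ) * |s|) :=
            hcd.trans (mul_le_mul_of_nonneg_left hy5 (by positivity))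
          linarith
      _ = K * |s| := by rw [hK_def]; ring
  -- the remainder function and its derivative
  have hf : ∀ s : ℝ, HasDerivAt (fun t => y t - (5 - 5 * a * t))
      (-(y s * c s) + 5 * c 0) s := by
    intro s
    have h2 : HasDerivAt (fun t : ℝ => 5 - 5 * a * t) (-(5 * a)) s := by
      simpa using ((hasDerivAt_id s).const_mul (5 * a)).const_sub 5
    have h3 := (hy s).sub h2
    convert h3 using 1
    show -(y s * c s) + 5 * c 0 = -(y s * c s) - -(5 * a)
    rw [hc0]
    ring
    all_goals rfl
  -- quadratic bound on the remainder
  have hKq : ∀ t : ℝ, 0 < t → t < δ → |y t - (5 - 5 * a * t)| ≤ K * t ^ 2 := by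
    intro t ht htδ
    have hmvt := Convex.norm_image_sub_le_of_norm_hasDerivWithin_le
      (f := fun t => y t - (5 - 5 * a * t)) (f' := fun s => -(y s * c s) + 5 * c 0)
      (s := Icc 0 t) (C := K * t)
      (fun s _ => (hf s).hasDerivWithinAt)
      (fun s hs => by
        have hds : dist s 0 < δ := by
          rw [Real.dist_eq, sub_zero, abs_of_nonneg hs.1]
          exact lt_of_le_of_lt hs.2 htδ
        calc ‖(-(y s * c s) + 5 * c 0)‖ ≤ K * |s| := hbound s hds
          _ ≤ K * t :=
            mul_le_mul_of_nonneg_left (by rw [abs_of_nonneg hs.1]; exact hs.2) hK0)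
      (convex_Icc 0 t) ⟨le_refl 0, ht.le⟩ ⟨ht.le, le_refl t⟩
    have hmvt' : |y t - (5 - 5 * a * t) - (y 0 - (5 - 5 * a * 0))| ≤ K * t * |t - 0| := hmvt
    rw [hy0] at hmvt'
    have hmvt'' : |y t - (5 - 5 * a * t)| ≤ K * t * t := by
      have he0 : (5:ℝ) - (5 - 5 * a * 0) = 0 := by ring
      rw [sub_zero] at hmvt'
      simpa [he0, abs_of_nonneg ht.le] using hmvt'
    calc |y t - (5 - 5 * a * t)| ≤ K * t * t := hmvt''
      _ = K * t ^ 2 := by ring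
  have habs : 0 < |a| := abs_pos.2 hup
  refine ⟨fun t _ => hxzero t, ?_, ?_, ?_⟩
  · -- second part
    rw [isBigO_iff]
    refine ⟨K, ?_⟩
    filter_upwards [Ioo_mem_nhdsGT_of_mem (show (0:ℝ) ∈ Ico 0 δ from ⟨le_refl 0, δpos⟩)]
      with t ht
    rw [Real.norm_eq_abs, Real.norm_eq_abs, abs_of_nonneg (sq_nonneg t)]
    exact hKq t ht.1 ht.2
  · -- third part
    rw [isBigO_iff]
    refine ⟨10 * |a| * K + K * K, ?_⟩
    have hmem : (0:ℝ) ∈ Ico 0 (min δ 1) := ⟨le_refl 0, lt_min δpos one_pos⟩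
    filter_upwards [Ioo_mem_nhdsGT_of_mem hmem] with t ht
    obtain ⟨ht0, htm⟩ := ht
    have htδ : t < δ := lt_of_lt_of_le htm (min_le_left _ _)
    have ht1 : t ≤ 1 := le_of_lt (lt_of_lt_of_le htm (min_le_right _ _))
    set e : ℝ := y t - (5 - 5 * a * t) with he_def
    have he : |e| ≤ K * t ^ 2 := hKq t ht0 htδ
    have hye : y t - 5 = e - 5 * a * t := by rw [he_def]; ring
    have hrw : (1 - (x t + 1)^2 - (y t - 5)^2) - (-25 * a^2 * t^2)
        = 10 * a * t * e - e ^ 2 := by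
      rw [hxzero t, hye]; ring
    rw [Real.norm_eq_abs, Real.norm_eq_abs, hrw]
    have tri : |10 * a * t * e - e ^ 2| ≤ |10 * a * t * e| + |e ^ 2| := by
      rw [sub_eq_add_neg]
      exact (abs_add_le _ _).trans (by rw [abs_neg])
    have habs10 : |10 * a * t * e| = 10 * |a| * t * |e| := by
      rw [abs_mul, abs_mul, abs_mul, abs_of_nonneg ht0.le]
      norm_num
    have hA : 10 * |a| * t * |e| ≤ 10 * |a| * K * t ^ 3 := by
      calc 10 * |a| * t * |e| ≤ 10 * |a| * t * (K * t ^ 2) :=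
            mul_le_mul_of_nonneg_left he (by positivity)
        _ = 10 * |a| * K * t ^ 3 := by ring
    have hB : |e ^ 2| ≤ K * K * t ^ 3 := by
      have hb1 : |e ^ 2| = |e| ^ 2 := abs_pow e 2
      have hb2 : |e| ^ 2 ≤ (K * t ^ 2) ^ 2 := pow_le_pow_left₀ (abs_nonneg e) he 2
      have hb3 : (K * t ^ 2) ^ 2 ≤ K * K * t ^ 3 := by
        have := mul_le_mul_of_nonneg_left ht1 (by positivity : (0:ℝ) ≤ K * K * t ^ 3)
        nlinarith [this]
      linarith [hb1.le, hb1.ge]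
    have ht3 : |t ^ 3| = t ^ 3 := abs_of_nonneg (by positivity)
    rw [ht3]
    linarith
  · -- fourth part
    have hqpos : 0 < 5 * |a| / (K + 1) := by positivity
    have hmem : (0:ℝ) ∈ Ico 0 (min δ (5 * |a| / (K + 1))) :=
      ⟨le_refl 0, lt_min δpos hqpos⟩
    filter_upwards [Ioo_mem_nhdsGT_of_mem hmem] with t ht
    obtain ⟨ht0, htm⟩ := ht
    have htδ : t < δ := lt_of_lt_of_le htm (min_le_left _ _)
    have htq : t < 5 * |a| / (K + 1) := lt_of_lt_of_le htm (min_le_right _ _)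
    have he : |y t - (5 - 5 * a * t)| ≤ K * t ^ 2 := hKq t ht0 htδ
    have hne : y t ≠ 5 := by
      intro hyt
      rw [hyt] at he
      have h1 : |5 - (5 - 5 * a * t)| = 5 * |a| * t := by
        rw [show (5:ℝ) - (5 - 5 * a * t) = 5 * a * t by ring, abs_mul, abs_mul,
          abs_of_nonneg ht0.le]
        norm_num
      rw [h1] at he
      have h2 : (K + 1) * t < 5 * |a| := by
        rw [lt_div_iff₀ (by positivity : (0:ℝ) < K + 1)] at htq
        linarith [htq]
      nlinarith [mul_lt_mul_of_pos_right h2 ht0, he, ht0]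
    have h5 : y t - 5 ≠ 0 := sub_ne_zero.2 hne
    have hsq : 0 < (y t - 5) ^ 2 :=
      lt_of_le_of_ne (sq_nonneg _) (Ne.symm (pow_ne_zero 2 h5))
    rw [hxzero t]
    have hfin : (1:ℝ) - (0 + 1)^2 - (y t - 5)^2 = -(y t - 5)^2 := by ring
    rw [hfin]
    linarith [hsq]
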